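/- arXiv:0808.0412 — 5 statements merged into one kernel-verified Lean document; each statement's English description precedes it below -/
import Mathlib

section
/- Let E be a compact Polish space, n ∈ ℕ, f : E^n → ℝ bounded and measurable, μ a Borel probability measure on E, ζ ∈ Δ, and x = (x_1, x_2, …) ∈ E^ℕ. Then ∫_{E^n} f d((1−|ζ|)μ + Σ_{i=1}^∞ ζ_i δ_{x_i})^{⊗n} = Σ_{φ : {1,…,n} → ℤ_{≥0}} (1−|ζ|)^{a(φ)} · ( ∏_{1 ≤ j ≤ n, φ(j) > 0} ζ_{φ(j)} ) · ∫_{E^{a(φ)}} f(η(φ,x,y)) μ^{⊗ a(φ)}(dy), where a(φ) := #{1 ≤ j ≤ n : φ(j) = 0}, and η(φ,x,y) ∈ E^n is defined by η(φ,x,y)_j = x_{φ(j)} if φ(j) > 0, and η(φ,x,y)_j = y_k with k = #{1 ≤ j' ≤ j : φ(j') = 0} if φ(j) = 0 (the sum over the countable set of functions φ being absolutely convergent). -/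
open MeasureTheory Finset
open scoped Classical

noncomputable section

/-- The infinite simplex `Δ = {ζ : ζ_1 ≥ ζ_2 ≥ ⋯ ≥ 0, Σ ζ_i ≤ 1}` (indexed from 0). -/
def DeltaSet : Set (ℕ → ℝ) :=
  {ζ | (∀ i, 0 ≤ ζ i) ∧ Antitone ζ ∧ ∀ n, ∑ i ∈ Finset.range n, ζ i ≤ 1}

/-- `|ζ| = Σ_i ζ_i`. -/
def absΔ (ζ : ℕ → ℝ) : ℝ := ∑' i, ζ i

variable {E : Type} [MeasurableSpace E]

/-- The resampled measure `(1-|ζ|)μ + Σ_i ζ_i δ_{x_i}`. -/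
def resample (μ : Measure E) (ζ : ℕ → ℝ) (x : ℕ → E) : Measure E :=
  ENNReal.ofReal (1 - absΔ ζ) • μ +
    Measure.sum fun i => ENNReal.ofReal (ζ i) • Measure.dirac (x i)

/-- `a(φ)`, the number of indices `j` with `φ(j) = 0`. -/
def numZeros {n : ℕ} (φ : Fin n → ℕ) : ℕ := (Finset.univ.filter fun j => φ j = 0).card

/-- The vector `η(φ,x,y) ∈ E^n`: `η_j = x_{φ(j)}` if `φ(j) > 0` and otherwise the `k`-th
entry of `y`, where `k` is the number of indices `j' ≤ j` with `φ(j') = 0` (here zero-based: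
`x : ℕ → E` is indexed from 0, so `x_{φ(j)}` becomes `x (φ j - 1)`). -/
def eta {n : ℕ} (φ : Fin n → ℕ) (x : ℕ → E) (y : Fin (numZeros φ) → E) : Fin n → E :=
  fun j =>
    if h : φ j = 0 then
      y ⟨(Finset.univ.filter fun j' => j' < j ∧ φ j' = 0).card, by
        apply Finset.card_lt_card
        rw [Finset.ssubset_iff_of_subset]
        · exact ⟨j, by simpa using h, by simp⟩
        · intro a ha
          simp only [Finset.mem_filter, Finset.mem_univ, true_and] at ha ⊢
          exact ha.2⟩
    else x (φ j - 1)

/-- tsum-product exchange in ENNReal. -/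
lemma tsum_prod_pi_aux : ∀ (n : ℕ) (g : Fin n → ℕ → ENNReal),
    ∑' φ : Fin n → ℕ, ∏ i, g i (φ i) = ∏ i, ∑' k, g i k := by
  intro n
  induction n with
  | zero =>
    intro g
    simp only [Finset.univ_eq_empty, Finset.prod_empty]
    rw [tsum_eq_single (fun i => i.elim0)]
    · intro b hb
      exact absurd (Subsingleton.elim _ _) hb
  | succ n ih =>
    intro g
    rw [← (Fin.consEquiv (fun _ : Fin (n+1) => ℕ)).tsum_eq]
    have : ∀ p : ℕ × (Fin n → ℕ),
        (∏ i, g i (Fin.consEquiv (fun _ : Fin (n+1) => ℕ) p i)) =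
          g 0 p.1 * ∏ i : Fin n, g i.succ (p.2 i) := by
      intro p
      simp only [Fin.consEquiv_apply]
      rw [Fin.prod_univ_succ]
      simp
    calc ∑' p : ℕ × (Fin n → ℕ), ∏ i, g i (Fin.consEquiv (fun _ : Fin (n+1) => ℕ) p i)
        = ∑' (a : ℕ) (b : Fin n → ℕ), g 0 a * ∏ i : Fin n, g i.succ (b i) := by
          rw [← ENNReal.tsum_prod]; exact tsum_congr fun p => this p
      _ = (∑' a : ℕ, g 0 a) * ∑' b : Fin n → ℕ, ∏ i : Fin n, g i.succ (b i) := by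
          simp_rw [ENNReal.tsum_mul_left]
          rw [ENNReal.tsum_mul_right]
      _ = ∏ i, ∑' k, g i k := by
          rw [ih fun i => g i.succ, Fin.prod_univ_succ]

/-- Product measure of a countable sum of measures. -/
lemma pi_sum_meas (n : ℕ) (m : ℕ → Measure E) [∀ k, SigmaFinite (m k)]
    [SigmaFinite (Measure.sum m)] :
    Measure.pi (fun _ : Fin n => Measure.sum m) =
      Measure.sum (fun φ : Fin n → ℕ => Measure.pi fun i => m (φ i)) := by
  apply Measure.pi_eq
  intro s hs
  rw [Measure.sum_apply _ (MeasurableSet.univ_pi hs)]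
  simp_rw [Measure.pi_pi]
  rw [tsum_prod_pi_aux n fun i k => m k (s i)]
  congr 1
  ext i
  rw [Measure.sum_apply _ (hs i)]

/-- Product measure of scalar multiples. -/
lemma pi_smul_meas (n : ℕ) (c : Fin n → ENNReal) (hc : ∀ i, c i ≠ ⊤)
    (ν : Fin n → Measure E) [∀ i, IsFiniteMeasure (ν i)] [∀ i, SigmaFinite (ν i)] :
    Measure.pi (fun i => c i • ν i) = (∏ i, c i) • Measure.pi ν := by
  haveI : ∀ i, IsFiniteMeasure (c i • ν i) := fun i => by
    constructor
    rw [Measure.smul_apply, smul_eq_mul]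
    exact ENNReal.mul_lt_top (hc i).lt_top (measure_lt_top _ _)
  apply Measure.pi_eq
  intro s hs
  simp only [Measure.smul_apply, smul_eq_mul, Measure.pi_pi]
  rw [Finset.prod_mul_distrib]


/-- The index map sending a zero position to its rank among zero positions. -/
def zidx {n : ℕ} (φ : Fin n → ℕ) (j : {j : Fin n // φ j = 0}) : Fin (numZeros φ) :=
  ⟨(Finset.univ.filter fun j' => j' < j.1 ∧ φ j' = 0).card, by
    apply Finset.card_lt_card
    rw [Finset.ssubset_iff_of_subset]
    · exact ⟨j.1, by simpa using j.2, by simp⟩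
    · intro a ha
      simp only [Finset.mem_filter, Finset.mem_univ, true_and] at ha ⊢
      exact ha.2⟩

lemma eta_zero {n : ℕ} (φ : Fin n → ℕ) (x : ℕ → E) (y : Fin (numZeros φ) → E)
    {j : Fin n} (h : φ j = 0) : eta φ x y j = y (zidx φ ⟨j, h⟩) := by
  simp only [eta, dif_pos h]; rfl

lemma eta_nonzero {n : ℕ} (φ : Fin n → ℕ) (x : ℕ → E) (y : Fin (numZeros φ) → E)
    {j : Fin n} (h : ¬ φ j = 0) : eta φ x y j = x (φ j - 1) := by
  simp only [eta, dif_neg h]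

lemma zidx_bijective {n : ℕ} (φ : Fin n → ℕ) : Function.Bijective (zidx φ) := by
  rw [Fintype.bijective_iff_injective_and_card]
  constructor
  · have key : ∀ a b : {j : Fin n // φ j = 0}, a.1 < b.1 → (zidx φ a).1 < (zidx φ b).1 := by
      intro a b hab
      show (Finset.univ.filter fun j' => j' < a.1 ∧ φ j' = 0).card <
        (Finset.univ.filter fun j' => j' < b.1 ∧ φ j' = 0).card
      apply Finset.card_lt_card
      rw [Finset.ssubset_iff_of_subset]
      · exact ⟨a.1, by simp [hab, a.2], by simp⟩
      · intro c hc
        simp only [Finset.mem_filter, Finset.mem_univ, true_and] at hc ⊢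
        exact ⟨hc.1.trans hab, hc.2⟩
    intro a b hab
    rcases lt_trichotomy a.1 b.1 with h | h | h
    · exact absurd (congrArg Fin.val hab) (key a b h).ne
    · exact Subtype.ext h
    · exact absurd (congrArg Fin.val hab).symm (key b a h).ne
  · rw [Fintype.card_subtype, Fintype.card_fin, numZeros]

lemma measurable_eta {n : ℕ} (φ : Fin n → ℕ) (x : ℕ → E) :
    Measurable (eta φ x) := by
  apply measurable_pi_lambda
  intro j
  by_cases h : φ j = 0
  · simp only [eta, dif_pos h]
    exact measurable_pi_apply _
  · simp only [eta, dif_neg h]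
    exact measurable_const

lemma pi_ite_eq_map {n : ℕ} (φ : Fin n → ℕ) (x : ℕ → E) (μ : Measure E)
    [IsProbabilityMeasure μ] :
    Measure.pi (fun j : Fin n => if φ j = 0 then μ else Measure.dirac (x (φ j - 1))) =
      Measure.map (eta φ x) (Measure.pi fun _ : Fin (numZeros φ) => μ) := by
  haveI : ∀ j : Fin n, IsProbabilityMeasure
      (if φ j = 0 then μ else Measure.dirac (x (φ j - 1))) := by
    intro j; split <;> infer_instance
  apply Measure.pi_eq
  intro s hs
  rw [Measure.map_apply (measurable_eta φ x) (MeasurableSet.univ_pi hs)]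
  set e : {j : Fin n // φ j = 0} ≃ Fin (numZeros φ) :=
    Equiv.ofBijective _ (zidx_bijective φ) with he
  by_cases hc : ∀ j, ¬ φ j = 0 → x (φ j - 1) ∈ s j
  · have hpre : eta φ x ⁻¹' Set.univ.pi s =
        Set.univ.pi (fun i : Fin (numZeros φ) => s (e.symm i).1) := by
      ext y
      simp only [Set.mem_preimage, Set.mem_univ_pi]
      constructor
      · intro hy i
        have h0 := (e.symm i).2
        have := hy (e.symm i).1
        rw [eta_zero φ x y h0] at this
        have hz : zidx φ ⟨(e.symm i).1, h0⟩ = i := by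
          rw [show (⟨(e.symm i).1, h0⟩ : {j : Fin n // φ j = 0}) = e.symm i from rfl]
          exact e.apply_symm_apply i
        rwa [hz] at this
      · intro hy j
        by_cases h : φ j = 0
        · rw [eta_zero φ x y h]
          have := hy (e ⟨j, h⟩)
          rwa [e.symm_apply_apply] at this
        · rw [eta_nonzero φ x y h]
          exact hc j h
    rw [hpre, Measure.pi_pi]
    have h1 : (∏ i : Fin (numZeros φ), μ (s (e.symm i).1)) =
        ∏ j ∈ Finset.univ.filter (fun j => φ j = 0), μ (s j) := by
      have ha : (∏ j : {j : Fin n // φ j = 0}, μ (s j.1)) =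
          ∏ i : Fin (numZeros φ), μ (s (e.symm i).1) :=
        Fintype.prod_equiv e (fun j => μ (s j.1)) (fun i => μ (s (e.symm i).1))
          (fun j => by rw [e.symm_apply_apply])
      have hb := Finset.prod_subtype (p := fun j : Fin n => φ j = 0) (F := inferInstance)
        (Finset.univ.filter (fun j => φ j = 0)) (by simp) (fun j => μ (s j))
      rw [← ha, hb]
    rw [h1, ← Finset.prod_filter_mul_prod_filter_not Finset.univ (fun j => φ j = 0)]
    have h2 : ∏ j ∈ Finset.univ.filter (fun j => ¬ φ j = 0),
        (if φ j = 0 then μ else Measure.dirac (x (φ j - 1))) (s j) = 1 := by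
      apply Finset.prod_eq_one
      intro j hj
      simp only [Finset.mem_filter, Finset.mem_univ, true_and] at hj
      rw [if_neg hj, Measure.dirac_apply' _ (hs j),
        Set.indicator_of_mem (hc j hj)]
      rfl
    rw [h2, mul_one]
    apply Finset.prod_congr rfl
    intro j hj
    simp only [Finset.mem_filter, Finset.mem_univ, true_and] at hj
    rw [if_pos hj]
  · push_neg at hc
    obtain ⟨j, hj, hxj⟩ := hc
    have hpre : eta φ x ⁻¹' Set.univ.pi s = ∅ := by
      ext y
      simp only [Set.mem_preimage, Set.mem_univ_pi, Set.mem_empty_iff_false, iff_false]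
      intro hy
      have := hy j
      rw [eta_nonzero φ x y hj] at this
      exact hxj this
    rw [hpre, measure_empty]
    symm
    apply Finset.prod_eq_zero (Finset.mem_univ j)
    rw [if_neg hj, Measure.dirac_apply' _ (hs j), Set.indicator_of_notMem hxj]


/-- expansion of `∫ f d((1-|ζ|)μ + Σ_i ζ_i δ_{x_i})^{⊗n}` as an absolutely
convergent sum over maps `φ : {1,…,n} → ℤ_{≥0}`. -/
theorem integral_pow_resample_eq_tsum
    (E : Type) [TopologicalSpace E] [CompactSpace E] [PolishSpace E]
    [MeasurableSpace E] [BorelSpace E]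
    (n : ℕ) (hn : 0 < n) (f : (Fin n → E) → ℝ)
    (hf : Measurable f) (hfbdd : ∃ C, ∀ x, |f x| ≤ C)
    (μ : Measure E) [IsProbabilityMeasure μ]
    (ζ : ℕ → ℝ) (hζ : ζ ∈ DeltaSet) (x : ℕ → E) :
    Summable (fun φ : Fin n → ℕ =>
      (1 - absΔ ζ) ^ numZeros φ
        * (∏ j ∈ Finset.univ.filter fun j => φ j ≠ 0, ζ (φ j - 1))
        * ∫ y, f (eta φ x y) ∂(Measure.pi fun _ : Fin (numZeros φ) => μ)) ∧
    ∫ z, f z ∂(Measure.pi fun _ : Fin n => resample μ ζ x) =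
      ∑' φ : Fin n → ℕ,
        (1 - absΔ ζ) ^ numZeros φ
          * (∏ j ∈ Finset.univ.filter fun j => φ j ≠ 0, ζ (φ j - 1))
          * ∫ y, f (eta φ x y) ∂(Measure.pi fun _ : Fin (numZeros φ) => μ) := by
  classical
  obtain ⟨C, hC⟩ := hfbdd
  have hnn : ∀ i, 0 ≤ ζ i := hζ.1
  have hsum : Summable ζ := summable_of_sum_range_le hnn hζ.2.2
  have ht1 : absΔ ζ ≤ 1 := Summable.tsum_le_of_sum_range_le hsum hζ.2.2
  have ht0 : 0 ≤ absΔ ζ := tsum_nonneg hnn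
  have h1t : 0 ≤ 1 - absΔ ζ := by linarith
  set m : ℕ → Measure E := fun k =>
    if k = 0 then ENNReal.ofReal (1 - absΔ ζ) • μ
    else ENNReal.ofReal (ζ (k - 1)) • Measure.dirac (x (k - 1)) with hm
  have h00 : m 0 = ENNReal.ofReal (1 - absΔ ζ) • μ := by simp [hm]
  have hkk : ∀ k, m (k + 1) = ENNReal.ofReal (ζ k) • Measure.dirac (x k) := by
    intro k; simp [hm]
  have hres : resample μ ζ x = Measure.sum m := by
    ext s hs
    rw [Measure.sum_apply _ hs, tsum_eq_zero_add' ENNReal.summable, h00]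
    simp only [hkk]
    rw [resample, Measure.add_apply, Measure.sum_apply _ hs]
  have hprob : IsProbabilityMeasure (resample μ ζ x) := by
    constructor
    simp only [resample, Measure.add_apply, Measure.smul_apply, smul_eq_mul,
      Measure.sum_apply _ MeasurableSet.univ, measure_univ, mul_one]
    rw [← ENNReal.ofReal_tsum_of_nonneg hnn hsum]
    show ENNReal.ofReal (1 - absΔ ζ) + ENNReal.ofReal (absΔ ζ) = 1
    rw [← ENNReal.ofReal_add h1t ht0]
    norm_num
  have hsm : ∀ (r : ℝ) (ν : Measure E), IsProbabilityMeasure ν →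
      IsFiniteMeasure (ENNReal.ofReal r • ν) := by
    intro r ν hν
    constructor
    rw [Measure.smul_apply, smul_eq_mul, measure_univ, mul_one]
    exact ENNReal.ofReal_lt_top
  haveI : ∀ k, IsFiniteMeasure (m k) := by
    intro k
    rcases Nat.eq_zero_or_pos k with hk0 | hk0
    · rw [hk0, h00]; exact hsm _ _ inferInstance
    · obtain ⟨k', rfl⟩ := Nat.exists_eq_add_of_lt hk0
      rw [zero_add, hkk]; exact hsm _ _ inferInstance
  haveI := hprob
  haveI hfin : IsFiniteMeasure (Measure.sum m) := by
    rw [← hres]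
    exact ⟨by rw [measure_univ]; exact ENNReal.one_lt_top⟩
  have hpi : Measure.pi (fun _ : Fin n => resample μ ζ x) =
      Measure.sum (fun φ : Fin n → ℕ => Measure.pi fun i => m (φ i)) := by
    rw [hres]; exact pi_sum_meas n m
  haveI : ∀ (φ : Fin n → ℕ) (j : Fin n), IsProbabilityMeasure
      (if φ j = 0 then μ else Measure.dirac (x (φ j - 1))) := by
    intro φ j; split <;> infer_instance
  have hφeq : ∀ φ : Fin n → ℕ, (Measure.pi fun i => m (φ i)) =
      (∏ j : Fin n, (if φ j = 0 then ENNReal.ofReal (1 - absΔ ζ)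
          else ENNReal.ofReal (ζ (φ j - 1)))) •
        Measure.map (eta φ x) (Measure.pi fun _ : Fin (numZeros φ) => μ) := by
    intro φ
    haveI : ∀ j : Fin n, IsFiniteMeasure
        (if φ j = 0 then μ else Measure.dirac (x (φ j - 1))) := fun j =>
      ⟨by rw [measure_univ]; exact ENNReal.one_lt_top⟩
    haveI : ∀ j : Fin n, SigmaFinite
        (if φ j = 0 then μ else Measure.dirac (x (φ j - 1))) := fun j => inferInstance
    have hsplit : (fun j : Fin n => m (φ j)) = fun j =>
        (if φ j = 0 then ENNReal.ofReal (1 - absΔ ζ)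
          else ENNReal.ofReal (ζ (φ j - 1))) •
        (if φ j = 0 then μ else Measure.dirac (x (φ j - 1))) := by
      funext j
      by_cases h : φ j = 0 <;> simp [hm, h]
    rw [hsplit, pi_smul_meas n _ (fun j => by split <;> exact ENNReal.ofReal_ne_top),
      pi_ite_eq_map]
  have hscal : ∀ φ : Fin n → ℕ,
      (∏ j : Fin n, (if φ j = 0 then ENNReal.ofReal (1 - absΔ ζ)
          else ENNReal.ofReal (ζ (φ j - 1)))).toReal =
      (1 - absΔ ζ) ^ numZeros φ
        * ∏ j ∈ Finset.univ.filter fun j => φ j ≠ 0, ζ (φ j - 1) := by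
    intro φ
    rw [ENNReal.toReal_prod]
    have : ∀ j : Fin n, (if φ j = 0 then ENNReal.ofReal (1 - absΔ ζ)
        else ENNReal.ofReal (ζ (φ j - 1))).toReal =
        if φ j = 0 then (1 - absΔ ζ) else ζ (φ j - 1) := by
      intro j
      split
      · exact ENNReal.toReal_ofReal h1t
      · exact ENNReal.toReal_ofReal (hnn _)
    rw [Finset.prod_congr rfl fun j _ => this j,
      ← Finset.prod_filter_mul_prod_filter_not Finset.univ (fun j => φ j = 0)]
    congr 1
    · rw [Finset.prod_congr rfl (fun j hj => if_pos (Finset.mem_filter.mp hj).2),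
        Finset.prod_const, numZeros]
    · exact Finset.prod_congr rfl fun j hj =>
        if_neg (Finset.mem_filter.mp hj).2
  have hint : ∀ φ : Fin n → ℕ, ∫ z, f z ∂(Measure.pi fun i => m (φ i)) =
      (1 - absΔ ζ) ^ numZeros φ
        * (∏ j ∈ Finset.univ.filter fun j => φ j ≠ 0, ζ (φ j - 1))
        * ∫ y, f (eta φ x y) ∂(Measure.pi fun _ : Fin (numZeros φ) => μ) := by
    intro φ
    rw [hφeq φ, integral_smul_measure,
      integral_map (measurable_eta φ x).aemeasurable hf.aestronglyMeasurable,
      hscal φ, smul_eq_mul]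
  haveI := hprob
  have hIf : Integrable f (Measure.sum (fun φ : Fin n → ℕ => Measure.pi fun i => m (φ i))) := by
    rw [← hpi]
    haveI : ∀ i : Fin n, IsProbabilityMeasure ((fun _ : Fin n => resample μ ζ x) i) :=
      fun _ => hprob
    haveI hfin2 : IsFiniteMeasure (resample μ ζ x) :=
      ⟨by rw [measure_univ]; exact ENNReal.one_lt_top⟩
    haveI : ∀ i : Fin n, SigmaFinite ((fun _ : Fin n => resample μ ζ x) i) :=
      fun _ => inferInstance
    haveI : IsProbabilityMeasure (Measure.pi fun _ : Fin n => resample μ ζ x) :=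
      Measure.pi.instIsProbabilityMeasure _
    haveI : IsFiniteMeasure (Measure.pi fun _ : Fin n => resample μ ζ x) :=
      ⟨by rw [measure_univ]; exact ENNReal.one_lt_top⟩
    refine ⟨hf.aestronglyMeasurable, HasFiniteIntegral.of_bounded (C := C) ?_⟩
    exact Filter.Eventually.of_forall fun z => by rw [Real.norm_eq_abs]; exact hC z
  have hhs := hasSum_integral_measure hIf
  rw [← hpi] at hhs
  have hhs' : HasSum (fun φ : Fin n → ℕ =>
      (1 - absΔ ζ) ^ numZeros φ
        * (∏ j ∈ Finset.univ.filter fun j => φ j ≠ 0, ζ (φ j - 1))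
        * ∫ y, f (eta φ x y) ∂(Measure.pi fun _ : Fin (numZeros φ) => μ))
      (∫ z, f z ∂(Measure.pi fun _ : Fin n => resample μ ζ x)) := by
    have := funext hint
    rw [← this]
    exact hhs
  exact ⟨hhs'.summable, hhs'.tsum_eq.symm⟩

end
end

section
/- For every ζ ∈ Δ and every n ∈ ℕ, Σ_{π = {A_1,…,A_p} ∈ P_n, π not the partition into singletons} Σ_{l=0}^{s(π)} binom(s(π), l) (1−|ζ|)^{s(π)−l} Σ_{i_1,…,i_{p−s(π)+l} ∈ ℕ pairwise distinct} ζ_{i_1}^{|A_1|} ⋯ ζ_{i_{p−s(π)+l}}^{|A_{p−s(π)+l}|} ≤ (B_n − 1)·(ζ,ζ), where P_n is the set of partitions of {1,…,n}, B_n := |P_n| is the n-th Bell number, the blocks A_1,…,A_p of each partition are enumerated so that their sizes are decreasing, and s(π) denotes the number of singleton blocks of π. -/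
open MeasureTheory Finset
open scoped Classical

noncomputable section

/-- `(ζ,ζ) = Σ_i ζ_i²`. -/
def sqΔ (ζ : ℕ → ℝ) : ℝ := ∑' i, ζ i ^ 2

/-- The sum over pairwise distinct indices `i : ι → ℕ` of `∏_j ζ_{i_j}^{e_j}`. -/
def distinctSum (ζ : ℕ → ℝ) {ι : Type} [Fintype ι] (e : ι → ℕ) : ℝ :=
  ∑' φ : ι → ℕ, if Function.Injective φ then ∏ i, ζ (φ i) ^ e i else 0

/-- The integrand `Σ_{l=0}^{s} C(s,l) (1-|ζ|)^{s-l} Σ_{distinct} ζ_{i_1}^{k_1} ⋯` appearing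
in the coalescence rates, for a family of block sizes `K : ι → ℕ`; here `s` is the number of
indices with `K i = 1`, and the blocks of size `≥ 2` carry the exponents `K i`. -/
def rateIntegrand (ζ : ℕ → ℝ) {ι : Type} [Fintype ι] [DecidableEq ι] (K : ι → ℕ) : ℝ :=
  ∑ l ∈ Finset.range ((Finset.univ.filter fun i => K i = 1).card + 1),
    ((Finset.univ.filter fun i => K i = 1).card.choose l : ℝ)
      * (1 - absΔ ζ) ^ ((Finset.univ.filter fun i => K i = 1).card - l)
      * distinctSum ζ (Sum.elim (fun i : {i : ι // 2 ≤ K i} => K i.1) (fun _ : Fin l => 1))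


lemma tsum_pi_inj_le {ι : Type} [Fintype ι] (f : ι → ℕ → ℝ) (c : ι → ℝ)
    (hf : ∀ i j, 0 ≤ f i j) (hc : ∀ i, 0 ≤ c i)
    (hb : ∀ i (t : Finset ℕ), ∑ j ∈ t, f i j ≤ c i) :
    (∑' φ : ι → ℕ, if Function.Injective φ then ∏ i, f i (φ i) else 0) ≤ ∏ i, c i := by
  set g : (ι → ℕ) → ℝ := fun φ => if Function.Injective φ then ∏ i, f i (φ i) else 0 with hg
  have hg0 : ∀ φ, 0 ≤ g φ := by
    intro φ; dsimp [g]; split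
    · exact Finset.prod_nonneg fun i _ => hf i (φ i)
    · exact le_refl 0
  have key : ∀ S : Finset (ι → ℕ), ∑ φ ∈ S, g φ ≤ ∏ i, c i := by
    intro S
    have h1 : ∑ φ ∈ S, g φ ≤ ∑ φ ∈ S, ∏ i, f i (φ i) := by
      refine Finset.sum_le_sum fun φ _ => ?_
      dsimp [g]; split
      · exact le_refl _
      · exact Finset.prod_nonneg fun i _ => hf i (φ i)
    have h2 : S ⊆ Fintype.piFinset fun i => S.image fun φ => φ i := by
      intro φ hφ
      rw [Fintype.mem_piFinset]
      exact fun i => Finset.mem_image_of_mem _ hφ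
    have h3 : ∑ φ ∈ S, ∏ i, f i (φ i)
        ≤ ∑ φ ∈ Fintype.piFinset (fun i => S.image fun φ => φ i), ∏ i, f i (φ i) :=
      Finset.sum_le_sum_of_subset_of_nonneg h2 fun φ _ _ =>
        Finset.prod_nonneg fun i _ => hf i (φ i)
    have h4 : ∑ φ ∈ Fintype.piFinset (fun i => S.image fun φ => φ i), ∏ i, f i (φ i)
        = ∏ i, ∑ j ∈ S.image fun φ => φ i, f i j :=
      (Finset.prod_univ_sum _ _).symm
    have h5 : ∏ i, ∑ j ∈ S.image fun φ => φ i, f i j ≤ ∏ i, c i := by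
      refine Finset.prod_le_prod (fun i _ => Finset.sum_nonneg fun j _ => hf i j)
        fun i _ => hb i _
    linarith
  by_cases hS : Summable g
  · exact Summable.tsum_le_of_sum_le hS key
  · rw [tsum_eq_zero_of_not_summable hS]
    exact Finset.prod_nonneg fun i _ => hc i

lemma rateIntegrand_le (ζ : ℕ → ℝ) (hζ : ζ ∈ DeltaSet) {ι : Type} [Fintype ι]
    [DecidableEq ι] (K : ι → ℕ) (hbig : ∃ i, 2 ≤ K i) : rateIntegrand ζ K ≤ sqΔ ζ := by
  obtain ⟨h0, hmono, hsum1⟩ := hζ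
  have hsummable : Summable ζ := summable_of_sum_range_le h0 hsum1
  have hζle1 : ∀ i, ζ i ≤ 1 := by
    intro i
    calc ζ i ≤ ∑ j ∈ Finset.range (i + 1), ζ j :=
          Finset.single_le_sum (fun j _ => h0 j) (Finset.self_mem_range_succ i)
      _ ≤ 1 := hsum1 _
  have ha0 : 0 ≤ absΔ ζ := tsum_nonneg h0
  have ha1 : absΔ ζ ≤ 1 := Summable.tsum_le_of_sum_range_le hsummable hsum1
  have hsq2 : Summable fun j => ζ j ^ 2 :=
    Summable.of_nonneg_of_le (fun j => by positivity)
      (fun j => by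
        calc ζ j ^ 2 ≤ ζ j ^ 1 := pow_le_pow_of_le_one (h0 j) (hζle1 j) one_le_two
          _ = ζ j := pow_one _) hsummable
  have hsq0 : 0 ≤ sqΔ ζ := tsum_nonneg fun j => by positivity
  -- finite-sum bounds
  have hb1 : ∀ (e : ℕ), 1 ≤ e → ∀ t : Finset ℕ, ∑ j ∈ t, ζ j ^ e ≤ absΔ ζ := by
    intro e he t
    calc ∑ j ∈ t, ζ j ^ e ≤ ∑ j ∈ t, ζ j :=
          Finset.sum_le_sum fun j _ => by
            calc ζ j ^ e ≤ ζ j ^ 1 := pow_le_pow_of_le_one (h0 j) (hζle1 j) he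
              _ = ζ j := pow_one _
      _ ≤ absΔ ζ := Summable.sum_le_tsum t (fun j _ => h0 j) hsummable
  have hb2 : ∀ (e : ℕ), 2 ≤ e → ∀ t : Finset ℕ, ∑ j ∈ t, ζ j ^ e ≤ sqΔ ζ := by
    intro e he t
    calc ∑ j ∈ t, ζ j ^ e ≤ ∑ j ∈ t, ζ j ^ 2 :=
          Finset.sum_le_sum fun j _ => pow_le_pow_of_le_one (h0 j) (hζle1 j) he
      _ ≤ sqΔ ζ := Summable.sum_le_tsum t (fun j _ => by positivity) hsq2
  obtain ⟨i₀v, hi₀v⟩ := hbig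
  set i₀ : {i : ι // 2 ≤ K i} := ⟨i₀v, hi₀v⟩ with hi₀
  set s := (Finset.univ.filter fun i => K i = 1).card with hs
  have hDS : ∀ l : ℕ,
      distinctSum ζ (Sum.elim (fun i : {i : ι // 2 ≤ K i} => K i.1) (fun _ : Fin l => 1))
        ≤ sqΔ ζ * absΔ ζ ^ l := by
    intro l
    set e := Sum.elim (fun i : {i : ι // 2 ≤ K i} => K i.1) (fun _ : Fin l => 1) with he
    set c : {i : ι // 2 ≤ K i} ⊕ Fin l → ℝ :=
      Sum.elim (fun i => if i = i₀ then sqΔ ζ else 1) (fun _ => absΔ ζ) with hc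
    have hcc : ∀ x, 0 ≤ c x := by
      rintro (i | j)
      · dsimp [c]; split
        · exact hsq0
        · exact zero_le_one
      · exact ha0
    have h := tsum_pi_inj_le (fun x j => ζ j ^ e x) c (fun x j => pow_nonneg (h0 j) _) hcc ?_
    · have hprod : ∏ x, c x = sqΔ ζ * absΔ ζ ^ l := by
        rw [Fintype.prod_sum_type]
        have h1 : (∏ i : {i : ι // 2 ≤ K i}, c (Sum.inl i)) = sqΔ ζ := by
          dsimp [c]
          rw [Finset.prod_ite_eq' Finset.univ i₀ fun _ => sqΔ ζ]
          simp
        have h2 : (∏ j : Fin l, c (Sum.inr j)) = absΔ ζ ^ l := by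
          dsimp [c]; simp
        rw [h1, h2]
      rw [distinctSum, ← hprod]
      exact h
    · rintro (i | j) t
      · dsimp [c, e]; split
        · exact hb2 _ i.2 t
        · exact (hb1 _ (le_trans one_le_two i.2) t).trans ha1
      · dsimp [c, e]
        simpa using hb1 1 le_rfl t
  rw [rateIntegrand]
  calc ∑ l ∈ Finset.range (s + 1),
        (s.choose l : ℝ) * (1 - absΔ ζ) ^ (s - l)
          * distinctSum ζ (Sum.elim (fun i : {i : ι // 2 ≤ K i} => K i.1) (fun _ : Fin l => 1))
      ≤ ∑ l ∈ Finset.range (s + 1),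
        (s.choose l : ℝ) * (1 - absΔ ζ) ^ (s - l) * (sqΔ ζ * absΔ ζ ^ l) := by
        refine Finset.sum_le_sum fun l _ => ?_
        have hnn : (0:ℝ) ≤ (s.choose l : ℝ) * (1 - absΔ ζ) ^ (s - l) := by
          have : (0:ℝ) ≤ 1 - absΔ ζ := by linarith
          positivity
        exact mul_le_mul_of_nonneg_left (hDS l) hnn
    _ = sqΔ ζ * ∑ l ∈ Finset.range (s + 1),
          absΔ ζ ^ l * (1 - absΔ ζ) ^ (s - l) * (s.choose l : ℝ) := by
        rw [Finset.mul_sum]; exact Finset.sum_congr rfl fun l _ => by ring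
    _ = sqΔ ζ := by
        rw [← add_pow (absΔ ζ) (1 - absΔ ζ) s]
        simp

/-- the part of the expansion coming from partitions that are not the partition
into singletons is bounded by `(B_n - 1)·(ζ,ζ)`, where `B_n` is the Bell number. -/
theorem partition_expansion_nonsingleton_le (ζ : ℕ → ℝ) (hζ : ζ ∈ DeltaSet) (n : ℕ)
    (hn : 0 < n) :
    ∑ π ∈ Finset.univ.filter
        (fun π : Finpartition (Finset.univ : Finset (Fin n)) => ¬ ∀ A ∈ π.parts, A.card = 1),
      rateIntegrand ζ (fun A : π.parts => (A : Finset (Fin n)).card)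
      ≤ ((Fintype.card (Finpartition (Finset.univ : Finset (Fin n))) : ℝ) - 1) * sqΔ ζ := by
  classical
  set F := Finset.univ.filter
      (fun π : Finpartition (Finset.univ : Finset (Fin n)) => ¬ ∀ A ∈ π.parts, A.card = 1)
    with hF
  have hsq0 : 0 ≤ sqΔ ζ := tsum_nonneg fun j => by positivity
  have hper : ∀ π ∈ F,
      rateIntegrand ζ (fun A : π.parts => (A : Finset (Fin n)).card) ≤ sqΔ ζ := by
    intro π hπ
    rw [hF, Finset.mem_filter] at hπ
    push_neg at hπ
    obtain ⟨A, hA, hA1⟩ := hπ.2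
    have hApos : 0 < A.card := Finset.card_pos.mpr (π.nonempty_of_mem_parts hA)
    refine rateIntegrand_le ζ hζ _ ⟨(⟨A, hA⟩ : π.parts), ?_⟩
    simpa using (by omega : 2 ≤ A.card)
  have hsum : ∑ π ∈ F, rateIntegrand ζ (fun A : π.parts => (A : Finset (Fin n)).card)
      ≤ (F.card : ℝ) * sqΔ ζ := by
    calc ∑ π ∈ F, rateIntegrand ζ (fun A : π.parts => (A : Finset (Fin n)).card)
        ≤ ∑ _π ∈ F, sqΔ ζ := Finset.sum_le_sum hper
      _ = (F.card : ℝ) * sqΔ ζ := by rw [Finset.sum_const, nsmul_eq_mul]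
  have hbot : (⊥ : Finpartition (Finset.univ : Finset (Fin n))) ∉ F := by
    rw [hF, Finset.mem_filter]
    rintro ⟨-, h⟩
    refine h fun A hA => ?_
    rw [Finpartition.parts_bot, Finset.mem_map] at hA
    obtain ⟨a, -, rfl⟩ := hA
    simp
  have hcard : F.card + 1 ≤ Fintype.card (Finpartition (Finset.univ : Finset (Fin n))) := by
    have : F ⊂ Finset.univ := Finset.ssubset_univ_iff.mpr fun h => hbot (h ▸ Finset.mem_univ _)
    have := Finset.card_lt_card this
    simpa [Finset.card_univ] using this
  have hcardR : (F.card : ℝ)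
      ≤ (Fintype.card (Finpartition (Finset.univ : Finset (Fin n))) : ℝ) - 1 := by
    have := (Nat.cast_le (α := ℝ)).mpr hcard
    push_cast at this
    linarith
  calc ∑ π ∈ F, rateIntegrand ζ (fun A : π.parts => (A : Finset (Fin n)).card)
      ≤ (F.card : ℝ) * sqΔ ζ := hsum
    _ ≤ ((Fintype.card (Finpartition (Finset.univ : Finset (Fin n))) : ℝ) - 1) * sqΔ ζ :=
        mul_le_mul_of_nonneg_right hcardR hsq0

end
end

section
/- Let Ξ_0 be a finite measure on Δ with Ξ_0({0}) = 0, let E be a compact Polish space, n ∈ ℕ, and let f : E^n → ℝ be bounded and measurable. If μ is a Borel probability measure on E such that G_f(ν) ≤ G_f(μ) for all Borel probability measures ν on E, then L^{Ξ_0}G_f(μ) ≤ 0 (the positive maximum principle). -/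
open MeasureTheory Finset
open scoped Classical

noncomputable section

variable {E : Type} [MeasurableSpace E]

/-- `G_f(μ) = ∫ f dμ^{⊗n}`. -/
def Gf {n : ℕ} (f : (Fin n → E) → ℝ) (μ : Measure E) : ℝ :=
  ∫ x, f x ∂(Measure.pi fun _ : Fin n => μ)

/-- The generator `L^{Ξ₀}` applied to `G_f` at `μ`, where `μInf` is the infinite product
measure `μ^{⊗ℕ}` on `E^ℕ`. -/
def LXi (Ξ₀ : Measure DeltaSet) (μInf : Measure (ℕ → E)) {n : ℕ}
    (f : (Fin n → E) → ℝ) (μ : Measure E) : ℝ :=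
  ∫ ζ : DeltaSet,
    (∫ x, (Gf f (resample μ (ζ : ℕ → ℝ) x) - Gf f μ) ∂μInf) * (sqΔ (ζ : ℕ → ℝ))⁻¹ ∂Ξ₀


lemma resample_isProbabilityMeasure (μ : Measure E) [IsProbabilityMeasure μ]
    {ζ : ℕ → ℝ} (hζ : ζ ∈ DeltaSet) (x : ℕ → E) :
    IsProbabilityMeasure (resample μ ζ x) := by
  obtain ⟨h0, hanti, hle⟩ := hζ
  have hsummable : Summable ζ := summable_of_sum_range_le h0 hle
  have habs_le : absΔ ζ ≤ 1 := Summable.tsum_le_of_sum_range_le hsummable hle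
  have habs_nonneg : 0 ≤ absΔ ζ := tsum_nonneg h0
  constructor
  rw [resample, Measure.add_apply, Measure.smul_apply,
    Measure.sum_apply _ MeasurableSet.univ]
  simp only [Measure.smul_apply, measure_univ, smul_eq_mul, mul_one]
  rw [← ENNReal.ofReal_tsum_of_nonneg h0 hsummable,
    show (∑' n, ζ n) = absΔ ζ from rfl,
    ← ENNReal.ofReal_add (by linarith) habs_nonneg]
  simp

/-- the positive maximum principle for `L^{Ξ₀}`: if `G_f` attains its maximum
over probability measures at `μ`, then `L^{Ξ₀}G_f(μ) ≤ 0`. -/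
theorem LXi_nonpos_of_isMaxOn
    (Ξ₀ : Measure DeltaSet) [IsFiniteMeasure Ξ₀]
    (hΞ₀ : Ξ₀ {ζ | ∀ i, (ζ : ℕ → ℝ) i = 0} = 0)
    (E : Type) [TopologicalSpace E] [CompactSpace E] [PolishSpace E]
    [MeasurableSpace E] [BorelSpace E]
    (n : ℕ) (hn : 0 < n) (f : (Fin n → E) → ℝ)
    (hf : Measurable f) (hfbdd : ∃ C, ∀ x, |f x| ≤ C)
    (μ : Measure E) [IsProbabilityMeasure μ]
    (μInf : Measure (ℕ → E))
    (hμInf : ∀ m : ℕ,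
      Measure.map (fun (x : ℕ → E) (i : Fin m) => x i) μInf = Measure.pi fun _ : Fin m => μ)
    (hmax : ∀ ν : Measure E, IsProbabilityMeasure ν → Gf f ν ≤ Gf f μ) :
    LXi Ξ₀ μInf f μ ≤ 0 := by
  apply integral_nonpos
  intro ζ
  apply mul_nonpos_of_nonpos_of_nonneg
  · apply integral_nonpos
    intro x
    simp only [Pi.zero_apply, sub_nonpos]
    exact hmax _ (resample_isProbabilityMeasure μ ζ.2 x)
  · exact inv_nonneg.2 (tsum_nonneg fun i => sq_nonneg _)

end
end

section
/- For every ε > 0 there exists a constant C < ∞ such that the following holds for every l ∈ ℕ: if (v_m)_{m∈ℕ} is a sequence of numbers in [0,1] with Σ_{m∈ℕ} v_m² ≤ l^{−4}, and (b_m)_{m∈ℕ} is an independent family of random variables in which b_m has the binomial distribution with parameters l and v_m, then P( Σ_{m∈ℕ} max(b_m − 1, 0) > ε l ) ≤ C l^{−6}. -/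
open MeasureTheory ProbabilityTheory Finset

noncomputable section

lemma geom_tail_sum (r : ℝ) (hr0 : 0 ≤ r) (hr : r ≤ 1/2) (t l : ℕ) :
    ∑ k ∈ Finset.Icc t l, r ^ k ≤ 2 * r ^ t := by
  have h1 : ∑ k ∈ Finset.Icc t l, r ^ k ≤ ∑ k ∈ Finset.Icc t l, r ^ t * (1/2) ^ (k - t) := by
    apply Finset.sum_le_sum
    intro k hk
    have hkt : t ≤ k := (Finset.mem_Icc.1 hk).1
    calc r ^ k = r ^ t * r ^ (k - t) := by rw [← pow_add, Nat.add_sub_cancel' hkt]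
      _ ≤ r ^ t * (1/2) ^ (k - t) := by
          have := pow_le_pow_left₀ hr0 hr (k - t)
          exact mul_le_mul_of_nonneg_left this (pow_nonneg hr0 t)
  have h2 : ∑ k ∈ Finset.Icc t l, (1/2 : ℝ) ^ (k - t) ≤ 2 := by
    have him : ∑ k ∈ Finset.Icc t l, (1/2 : ℝ) ^ (k - t)
        = ∑ j ∈ (Finset.Icc t l).image (· - t), (1/2 : ℝ) ^ j := by
      rw [Finset.sum_image]
      intro x hx y hy hxy
      have := (Finset.mem_Icc.1 hx).1
      have := (Finset.mem_Icc.1 hy).1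
      simp only at hxy
      omega
    rw [him]
    have hsub : (Finset.Icc t l).image (· - t) ⊆ Finset.range (l + 1) := by
      intro j hj
      simp only [Finset.mem_image, Finset.mem_Icc] at hj
      obtain ⟨k, ⟨hk1, hk2⟩, rfl⟩ := hj
      simp only [Finset.mem_range]; omega
    calc ∑ j ∈ (Finset.Icc t l).image (· - t), (1/2 : ℝ) ^ j
        ≤ ∑ j ∈ Finset.range (l + 1), (1/2 : ℝ) ^ j :=
          Finset.sum_le_sum_of_subset_of_nonneg hsub (fun j _ _ => by positivity)
      _ ≤ 2 := sum_geometric_two_le _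
  calc ∑ k ∈ Finset.Icc t l, r ^ k ≤ r ^ t * ∑ k ∈ Finset.Icc t l, (1/2 : ℝ) ^ (k - t) := by
        rw [← Finset.mul_sum] at h1; exact h1
    _ ≤ r ^ t * 2 := mul_le_mul_of_nonneg_left h2 (pow_nonneg hr0 t)
    _ = 2 * r ^ t := by ring

lemma binom_tail (l : ℕ) (x : ℝ) (hx0 : 0 ≤ x) (hx1 : x ≤ 1)
    {Ω : Type} [mΩ : MeasurableSpace Ω] (P : Measure Ω) [IsProbabilityMeasure P]
    (f : Ω → ℕ) (hf : Measurable f)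
    (hpmf : ∀ k ≤ l, P {ω | f ω = k} =
      ENNReal.ofReal ((l.choose k : ℝ) * x ^ k * (1 - x) ^ (l - k)))
    (hlx : (l : ℝ) * x ≤ 1/2) (t : ℕ) :
    P {ω | t ≤ f ω} ≤ ENNReal.ofReal (2 * ((l : ℝ) * x) ^ t) := by
  have hmeas : ∀ k : ℕ, MeasurableSet {ω | f ω = k} :=
    fun k => hf (measurableSet_singleton k)
  have hnonneg : ∀ k, (0 : ℝ) ≤ (l.choose k : ℝ) * x ^ k * (1 - x) ^ (l - k) := by
    intro k
    have : (0:ℝ) ≤ 1 - x := by linarith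
    positivity
  have hbinom : ∑ k ∈ Finset.range (l + 1), (l.choose k : ℝ) * x ^ k * (1 - x) ^ (l - k) = 1 := by
    have h2 : ∑ k ∈ Finset.range (l + 1), (l.choose k : ℝ) * x ^ k * (1 - x) ^ (l - k)
        = (x + (1 - x)) ^ l := by
      rw [add_pow x (1 - x) l]
      exact Finset.sum_congr rfl (fun k _ => by ring)
    rw [h2]; norm_num
  have hle : P {ω | f ω ≤ l} = 1 := by
    have hset : {ω | f ω ≤ l} = ⋃ k ∈ Finset.range (l + 1), {ω | f ω = k} := by
      ext ω; simp [Nat.lt_succ_iff]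
    rw [hset, measure_biUnion_finset ?_ (fun k _ => hmeas k)]
    · rw [Finset.sum_congr rfl (fun k hk => hpmf k (by simpa [Nat.lt_succ_iff] using hk)),
        ← ENNReal.ofReal_sum_of_nonneg (fun k _ => hnonneg k), hbinom, ENNReal.ofReal_one]
    · intro i _ j _ hij
      simp only [Function.onFun, Set.disjoint_left]
      intro ω h1 h2
      exact hij (by simp only [Set.mem_setOf_eq] at h1 h2; omega)
  have hgt : P {ω | l < f ω} = 0 := by
    have hc : {ω | l < f ω} = {ω | f ω ≤ l}ᶜ := by ext ω; simp [not_le]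
    have hm : MeasurableSet {ω | f ω ≤ l} := hf measurableSet_Iic
    rw [hc, measure_compl hm (measure_ne_top _ _), hle, measure_univ, tsub_self]
  have hsubset : {ω | t ≤ f ω} ⊆ (⋃ k ∈ Finset.Icc t l, {ω | f ω = k}) ∪ {ω | l < f ω} := by
    intro ω hω
    by_cases h : f ω ≤ l
    · left
      refine Set.mem_biUnion (Finset.mem_Icc.2 ⟨hω, h⟩) rfl
    · right; simpa [not_le] using h
  calc P {ω | t ≤ f ω}
      ≤ P (⋃ k ∈ Finset.Icc t l, {ω | f ω = k}) + P {ω | l < f ω} :=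
        le_trans (measure_mono hsubset) (measure_union_le _ _)
    _ = P (⋃ k ∈ Finset.Icc t l, {ω | f ω = k}) := by rw [hgt, add_zero]
    _ ≤ ∑ k ∈ Finset.Icc t l, P {ω | f ω = k} := measure_biUnion_finset_le _ _
    _ ≤ ∑ k ∈ Finset.Icc t l, ENNReal.ofReal (((l : ℝ) * x) ^ k) := by
        apply Finset.sum_le_sum
        intro k hk
        rw [hpmf k (Finset.mem_Icc.1 hk).2]
        apply ENNReal.ofReal_le_ofReal
        have hch : (l.choose k : ℝ) ≤ (l : ℝ) ^ k := by
          calc (l.choose k : ℝ) ≤ (l : ℝ) ^ k / (k.factorial : ℝ) := Nat.choose_le_pow_div k l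
            _ ≤ (l : ℝ) ^ k := by
                apply div_le_self (by positivity)
                exact_mod_cast Nat.one_le_iff_ne_zero.2 k.factorial_ne_zero
        have h1x : (1 - x) ^ (l - k) ≤ 1 :=
          pow_le_one₀ (by linarith) (by linarith)
        calc (l.choose k : ℝ) * x ^ k * (1 - x) ^ (l - k)
            ≤ (l.choose k : ℝ) * x ^ k * 1 := by
              apply mul_le_mul_of_nonneg_left h1x (by positivity)
          _ = (l.choose k : ℝ) * x ^ k := by ring
          _ ≤ (l : ℝ) ^ k * x ^ k := mul_le_mul_of_nonneg_right hch (by positivity)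
          _ = ((l : ℝ) * x) ^ k := (mul_pow _ _ _).symm
    _ = ENNReal.ofReal (∑ k ∈ Finset.Icc t l, ((l : ℝ) * x) ^ k) :=
        (ENNReal.ofReal_sum_of_nonneg (fun k _ => by positivity)).symm
    _ ≤ ENNReal.ofReal (2 * ((l : ℝ) * x) ^ t) :=
        ENNReal.ofReal_le_ofReal (geom_tail_sum _ (by positivity) hlx t l)

lemma exists_four_distinct_of_not_small (T : Set ℕ) (h : ¬ (T.Finite ∧ T.ncard ≤ 3)) :
    ∃ a b c d : ℕ, a ∈ T ∧ b ∈ T ∧ c ∈ T ∧ d ∈ T ∧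
      a ≠ b ∧ a ≠ c ∧ a ≠ d ∧ b ≠ c ∧ b ≠ d ∧ c ≠ d := by
  obtain ⟨s, hsub, hcard⟩ : ∃ s : Finset ℕ, ↑s ⊆ T ∧ 4 ≤ s.card := by
    by_cases hfin : T.Finite
    · have h4 : 4 ≤ T.ncard := by by_contra h4; exact h ⟨hfin, by omega⟩
      rw [Set.ncard_eq_toFinset_card T hfin] at h4
      obtain ⟨s, hs, hsc⟩ := Finset.exists_subset_card_eq h4
      exact ⟨s, fun x hx => (hfin.mem_toFinset).1 (hs hx), le_of_eq hsc.symm⟩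
    · obtain ⟨t, hts, htfin, htcard⟩ := Set.Infinite.exists_subset_ncard_eq hfin 4
      refine ⟨htfin.toFinset, fun x hx => hts ((htfin.mem_toFinset).1 hx), ?_⟩
      rw [← Set.ncard_eq_toFinset_card t htfin, htcard]
  obtain ⟨a, ha⟩ := Finset.card_pos.1 (by omega : 0 < s.card)
  have h1 : 3 ≤ (s.erase a).card := by rw [Finset.card_erase_of_mem ha]; omega
  obtain ⟨b, hb⟩ := Finset.card_pos.1 (by omega : 0 < (s.erase a).card)
  have h2 : 2 ≤ ((s.erase a).erase b).card := by rw [Finset.card_erase_of_mem hb]; omega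
  obtain ⟨c, hc⟩ := Finset.card_pos.1 (by omega : 0 < ((s.erase a).erase b).card)
  have h3 : 1 ≤ (((s.erase a).erase b).erase c).card := by
    rw [Finset.card_erase_of_mem hc]; omega
  obtain ⟨d, hd⟩ := Finset.card_pos.1 (by omega : 0 < (((s.erase a).erase b).erase c).card)
  simp only [Finset.mem_erase] at hb hc hd
  refine ⟨a, b, c, d, hsub ha, hsub hb.2, hsub hc.2.2, hsub hd.2.2.2, ?_, ?_, ?_, ?_, ?_, ?_⟩
  · exact fun e => hb.1 e.symm
  · exact fun e => hc.2.1 e.symm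
  · exact fun e => hd.2.2.1 e.symm
  · exact fun e => hc.1 e.symm
  · exact fun e => hd.2.1 e.symm
  · exact fun e => hd.1 e.symm

/-- a fourth-moment bound for sums of truncated binomials. For every `ε > 0`
there is a constant `C` such that whenever `Σ_m v_m² ≤ l⁻⁴` and the `b_m` are independent
with `b_m ∼ Binomial(l, v_m)`, the probability that `Σ_m (b_m - 1)_+` exceeds `ε l` is at
most `C l⁻⁶`. -/
theorem binomial_truncated_sum_tail_bound (ε : ℝ) (hε : 0 < ε) :
    ∃ C : ℝ, ∀ l : ℕ, 0 < l →
      ∀ v : ℕ → ℝ, (∀ m, 0 ≤ v m) → (∀ m, v m ≤ 1) →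
        Summable (fun m => v m ^ 2) → (∑' m, v m ^ 2) ≤ ((l : ℝ) ^ 4)⁻¹ →
      ∀ (Ω : Type) (mΩ : MeasurableSpace Ω) (P : Measure Ω), IsProbabilityMeasure P →
      ∀ b : ℕ → Ω → ℕ, (∀ m, Measurable (b m)) →
        iIndepFun b P →
        (∀ m, ∀ k ≤ l, P {ω | b m ω = k} =
          ENNReal.ofReal ((l.choose k : ℝ) * v m ^ k * (1 - v m) ^ (l - k))) →
        P {ω | ENNReal.ofReal (ε * l) < ∑' m, ((b m ω - 1 : ℕ) : ENNReal)}
          ≤ ENNReal.ofReal (C / (l : ℝ) ^ 6) := by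
  classical
  set L : ℕ := max 2 (⌈12 / ε⌉₊) with hLdef
  refine ⟨max ((L : ℝ) ^ 6) 18, ?_⟩
  intro l hl v hv0 hv1 hvs hvsum Ω mΩ P hP b hb hind hpmf
  haveI : IsProbabilityMeasure P := hP
  have hl0 : (0 : ℝ) < (l : ℝ) := by exact_mod_cast hl
  have hl1 : (1 : ℝ) ≤ (l : ℝ) := by exact_mod_cast hl
  have hl6pos : (0 : ℝ) < (l : ℝ) ^ 6 := by positivity
  by_cases hlL : l < L
  · -- small l : just bound the probability by 1
    have hC : (1 : ℝ) ≤ (max ((L : ℝ) ^ 6) 18) / (l : ℝ) ^ 6 := by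
      rw [le_div_iff₀ hl6pos, one_mul]
      calc (l : ℝ) ^ 6 ≤ (L : ℝ) ^ 6 := by gcongr
        _ ≤ _ := le_max_left _ _
    calc P _ ≤ 1 := prob_le_one
      _ = ENNReal.ofReal 1 := by norm_num
      _ ≤ _ := ENNReal.ofReal_le_ofReal hC
  · push_neg at hlL
    have hl2 : 2 ≤ l := le_trans (le_max_left _ _) hlL
    have hl2' : (2 : ℝ) ≤ (l : ℝ) := by exact_mod_cast hl2
    have h12 : (12 : ℝ) ≤ ε * l := by
      have h1 : (⌈12 / ε⌉₊ : ℕ) ≤ l := le_trans (le_max_right _ _) hlL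
      have h2 : 12 / ε ≤ (l : ℝ) := le_trans (Nat.le_ceil _) (by exact_mod_cast h1)
      calc (12 : ℝ) = (12 / ε) * ε := by field_simp
        _ ≤ (l : ℝ) * ε := mul_le_mul_of_nonneg_right h2 hε.le
        _ = ε * l := mul_comm _ _
    -- bounds on v
    have hvm : ∀ m, v m ≤ ((l : ℝ) ^ 2)⁻¹ := by
      intro m
      have h1 : v m ^ 2 ≤ (((l : ℝ) ^ 2)⁻¹) ^ 2 := by
        calc v m ^ 2 ≤ ∑' n, v n ^ 2 := Summable.le_tsum hvs m (fun n _ => sq_nonneg (v n))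
          _ ≤ ((l : ℝ) ^ 4)⁻¹ := hvsum
          _ = (((l : ℝ) ^ 2)⁻¹) ^ 2 := by rw [inv_pow, ← pow_mul]
      exact (pow_le_pow_iff_left₀ (hv0 m) (by positivity) two_ne_zero).1 h1
    have hwl : ∀ m, (l : ℝ) * v m ≤ (l : ℝ)⁻¹ := by
      intro m
      calc (l : ℝ) * v m ≤ (l : ℝ) * ((l : ℝ) ^ 2)⁻¹ :=
            mul_le_mul_of_nonneg_left (hvm m) hl0.le
        _ = (l : ℝ)⁻¹ := by field_simp
    have hw2 : ∀ m, (l : ℝ) * v m ≤ 1 / 2 := by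
      intro m
      refine le_trans (hwl m) ?_
      rw [one_div]
      exact inv_anti₀ (by norm_num) hl2'
    -- threshold t
    set t : ℕ := ⌊ε * l / 3⌋₊ + 2 with htdef
    have ht6 : 6 ≤ t := by
      have h4 : (4 : ℕ) ≤ ⌊ε * l / 3⌋₊ := Nat.le_floor (by push_cast; linarith)
      omega
    have ht3 : 3 * ((t : ℝ) - 2) ≤ ε * l := by
      have h1 : (⌊ε * l / 3⌋₊ : ℝ) ≤ ε * l / 3 := Nat.floor_le (by positivity)
      have h2 : (t : ℝ) = (⌊ε * l / 3⌋₊ : ℝ) + 2 := by exact_mod_cast rfl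
      linarith
    -- events
    set A : ℕ → Set Ω := fun m => {ω | 2 ≤ b m ω} with hA
    set Big : Set Ω := ⋃ m, {ω | t ≤ b m ω} with hBig
    set Quad : Set Ω := ⋃ q : ℕ × ℕ × ℕ × ℕ,
      ⋃ (_ : q.1 ≠ q.2.1 ∧ q.1 ≠ q.2.2.1 ∧ q.1 ≠ q.2.2.2 ∧
            q.2.1 ≠ q.2.2.1 ∧ q.2.1 ≠ q.2.2.2 ∧ q.2.2.1 ≠ q.2.2.2),
      A q.1 ∩ (A q.2.1 ∩ (A q.2.2.1 ∩ A q.2.2.2)) with hQuad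
    -- inclusion
    have hincl : {ω | ENNReal.ofReal (ε * l) < ∑' m, ((b m ω - 1 : ℕ) : ENNReal)}
        ⊆ Big ∪ Quad := by
      intro ω hω
      by_contra hmem
      simp only [Set.mem_union, not_or] at hmem
      obtain ⟨hnb, hnq⟩ := hmem
      have hblt : ∀ m, b m ω < t := by
        intro m
        by_contra hcon
        exact hnb (Set.mem_iUnion.2 ⟨m, not_lt.1 hcon⟩)
      set T : Set ℕ := {m | 2 ≤ b m ω} with hT
      have hsmall : T.Finite ∧ T.ncard ≤ 3 := by
        by_contra hbig2
        obtain ⟨a, b', c, d, haT, hbT, hcT, hdT, n1, n2, n3, n4, n5, n6⟩ :=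
          exists_four_distinct_of_not_small T hbig2
        exact hnq <| Set.mem_iUnion.2 ⟨(a, b', c, d), Set.mem_iUnion.2
          ⟨⟨n1, n2, n3, n4, n5, n6⟩, haT, hbT, hcT, hdT⟩⟩
      obtain ⟨hTfin, hTcard⟩ := hsmall
      have hzero : ∀ m ∉ hTfin.toFinset, ((b m ω - 1 : ℕ) : ENNReal) = 0 := by
        intro m hm
        rw [Set.Finite.mem_toFinset] at hm
        have hm1 : b m ω ≤ 1 := by
          by_contra hcon
          exact hm (by simp only [hT, Set.mem_setOf_eq]; omega)
        simp [Nat.sub_eq_zero_of_le hm1]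
      have hfinal : ∑' m, ((b m ω - 1 : ℕ) : ENNReal) ≤ ENNReal.ofReal (ε * l) := by
        rw [tsum_eq_sum hzero]
        have hcard3 : hTfin.toFinset.card ≤ 3 := by
          rw [← Set.ncard_eq_toFinset_card T hTfin]; exact hTcard
        calc ∑ m ∈ hTfin.toFinset, ((b m ω - 1 : ℕ) : ENNReal)
            ≤ ∑ _m ∈ hTfin.toFinset, ((t - 2 : ℕ) : ENNReal) := by
              refine Finset.sum_le_sum (fun m _ => ?_)
              have := hblt m
              exact_mod_cast Nat.cast_le.2 (by omega : b m ω - 1 ≤ t - 2)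
          _ = (hTfin.toFinset.card : ENNReal) * ((t - 2 : ℕ) : ENNReal) := by
              rw [Finset.sum_const, nsmul_eq_mul]
          _ ≤ (3 : ENNReal) * ((t - 2 : ℕ) : ENNReal) := by
              gcongr
              exact_mod_cast hcard3
          _ = ((3 * (t - 2) : ℕ) : ENNReal) := by push_cast; ring
          _ ≤ ENNReal.ofReal (ε * l) := by
              rw [← ENNReal.ofReal_natCast (3 * (t - 2))]
              apply ENNReal.ofReal_le_ofReal
              have hfl : (⌊ε * ↑l / 3⌋₊ : ℝ) ≤ ε * ↑l / 3 := Nat.floor_le (by positivity)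
              push_cast [Nat.cast_sub (by omega : 2 ≤ t)]
              linarith
      exact absurd hω (not_lt.2 hfinal)
    -- bound on Big
    have hbig : P Big ≤ ENNReal.ofReal (2 * ((l : ℝ) ^ 6)⁻¹) := by
      have hptw : ∀ m, 2 * ((l : ℝ) * v m) ^ t
          ≤ 2 * ((l : ℝ)⁻¹) ^ (t - 2) * ((l : ℝ) * v m) ^ 2 := by
        intro m
        have hw0 : 0 ≤ (l : ℝ) * v m := mul_nonneg hl0.le (hv0 m)
        have : ((l : ℝ) * v m) ^ t = ((l : ℝ) * v m) ^ (t - 2) * ((l : ℝ) * v m) ^ 2 := by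
          rw [← pow_add, Nat.sub_add_cancel (by omega)]
        rw [this]
        have h1 : ((l : ℝ) * v m) ^ (t - 2) ≤ ((l : ℝ)⁻¹) ^ (t - 2) :=
          pow_le_pow_left₀ hw0 (hwl m) _
        calc 2 * (((l : ℝ) * v m) ^ (t - 2) * ((l : ℝ) * v m) ^ 2)
            ≤ 2 * (((l : ℝ)⁻¹) ^ (t - 2) * ((l : ℝ) * v m) ^ 2) := by
              apply mul_le_mul_of_nonneg_left _ (by norm_num)
              exact mul_le_mul_of_nonneg_right h1 (by positivity)
          _ = 2 * ((l : ℝ)⁻¹) ^ (t - 2) * ((l : ℝ) * v m) ^ 2 := by ring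
      have hsumg : Summable (fun m => 2 * ((l : ℝ)⁻¹) ^ (t - 2) * ((l : ℝ) * v m) ^ 2) := by
        have : (fun m => 2 * ((l : ℝ)⁻¹) ^ (t - 2) * ((l : ℝ) * v m) ^ 2)
            = fun m => (2 * ((l : ℝ)⁻¹) ^ (t - 2) * (l : ℝ) ^ 2) * v m ^ 2 := by
          funext m; ring
        rw [this]
        exact hvs.mul_left _
      have hsumf : Summable (fun m => 2 * ((l : ℝ) * v m) ^ t) :=
        Summable.of_nonneg_of_le (fun m => mul_nonneg (by norm_num) (pow_nonneg (mul_nonneg hl0.le (hv0 m)) t)) hptw hsumg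
      have hreal : ∑' m, 2 * ((l : ℝ) * v m) ^ t ≤ 2 * ((l : ℝ) ^ 6)⁻¹ := by
        have h1 : ∑' m, 2 * ((l : ℝ) * v m) ^ t
            ≤ ∑' m, 2 * ((l : ℝ)⁻¹) ^ (t - 2) * ((l : ℝ) * v m) ^ 2 :=
          Summable.tsum_le_tsum hptw hsumf hsumg
        have h2 : ∑' m, 2 * ((l : ℝ)⁻¹) ^ (t - 2) * ((l : ℝ) * v m) ^ 2
            = (2 * ((l : ℝ)⁻¹) ^ (t - 2) * (l : ℝ) ^ 2) * ∑' m, v m ^ 2 := by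
          rw [← tsum_mul_left]
          exact tsum_congr (fun m => by ring)
        have h3 : (2 * ((l : ℝ)⁻¹) ^ (t - 2) * (l : ℝ) ^ 2) * ∑' m, v m ^ 2
            ≤ (2 * ((l : ℝ)⁻¹) ^ (t - 2) * (l : ℝ) ^ 2) * ((l : ℝ) ^ 4)⁻¹ := by
          apply mul_le_mul_of_nonneg_left hvsum (by positivity)
        have h4 : (2 * ((l : ℝ)⁻¹) ^ (t - 2) * (l : ℝ) ^ 2) * ((l : ℝ) ^ 4)⁻¹
            = 2 * ((l : ℝ) ^ t)⁻¹ := by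
          rw [inv_pow]
          rw [show (l : ℝ) ^ t = (l : ℝ) ^ (t - 2) * (l : ℝ) ^ 2 by
            rw [← pow_add, Nat.sub_add_cancel (by omega)]]
          field_simp
        have h5 : ((l : ℝ) ^ t)⁻¹ ≤ ((l : ℝ) ^ 6)⁻¹ := by
          apply inv_anti₀ (by positivity)
          exact pow_le_pow_right₀ hl1 ht6
        calc ∑' m, 2 * ((l : ℝ) * v m) ^ t
            ≤ (2 * ((l : ℝ)⁻¹) ^ (t - 2) * (l : ℝ) ^ 2) * ((l : ℝ) ^ 4)⁻¹ := by
              rw [← h2] at h3; exact le_trans h1 h3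
          _ = 2 * ((l : ℝ) ^ t)⁻¹ := h4
          _ ≤ 2 * ((l : ℝ) ^ 6)⁻¹ := by linarith
      calc P Big ≤ ∑' m, P {ω | t ≤ b m ω} := measure_iUnion_le _
        _ ≤ ∑' m, ENNReal.ofReal (2 * ((l : ℝ) * v m) ^ t) :=
            ENNReal.tsum_le_tsum (fun m =>
              binom_tail l (v m) (hv0 m) (hv1 m) P (b m) (hb m) (hpmf m) (hw2 m) t)
        _ = ENNReal.ofReal (∑' m, 2 * ((l : ℝ) * v m) ^ t) :=
            (ENNReal.ofReal_tsum_of_nonneg (fun m => mul_nonneg (by norm_num) (pow_nonneg (mul_nonneg hl0.le (hv0 m)) t)) hsumf).symm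
        _ ≤ ENNReal.ofReal (2 * ((l : ℝ) ^ 6)⁻¹) := ENNReal.ofReal_le_ofReal hreal
    -- bound on Quad
    have hAmeas : ∀ i : ℕ, MeasurableSet[((fun _ : ℕ =>
        (inferInstance : MeasurableSpace ℕ)) i).comap (b i)] (A i) :=
      fun i => ⟨Set.Ici 2, trivial, rfl⟩
    set p : ℕ → ENNReal := fun m => P (A m) with hpdef
    have hquad_term : ∀ q : ℕ × ℕ × ℕ × ℕ,
        P (⋃ (_ : q.1 ≠ q.2.1 ∧ q.1 ≠ q.2.2.1 ∧ q.1 ≠ q.2.2.2 ∧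
              q.2.1 ≠ q.2.2.1 ∧ q.2.1 ≠ q.2.2.2 ∧ q.2.2.1 ≠ q.2.2.2),
          A q.1 ∩ (A q.2.1 ∩ (A q.2.2.1 ∩ A q.2.2.2)))
        ≤ p q.1 * (p q.2.1 * (p q.2.2.1 * p q.2.2.2)) := by
      rintro ⟨a, b', c, d⟩
      by_cases hc : a ≠ b' ∧ a ≠ c ∧ a ≠ d ∧ b' ≠ c ∧ b' ≠ d ∧ c ≠ d
      · obtain ⟨n1, n2, n3, n4, n5, n6⟩ := hc
        rw [Set.iUnion_eq_if, if_pos ⟨n1, n2, n3, n4, n5, n6⟩]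
        have hiie : A a ∩ (A b' ∩ (A c ∩ A d)) = ⋂ i ∈ ({a, b', c, d} : Finset ℕ), A i := by
          simp only [Finset.set_biInter_insert, Finset.set_biInter_singleton]
        rw [hiie, hind.meas_biInter (fun i _ => hAmeas i)]
        rw [Finset.prod_insert (by simp [n1, n2, n3]),
          Finset.prod_insert (by simp [n4, n5]),
          Finset.prod_insert (by simp [n6]), Finset.prod_singleton]
      · rw [Set.iUnion_eq_if, if_neg hc]
        simp
    have hps : ∑' m, p m ≤ ENNReal.ofReal (2 * ((l : ℝ) ^ 2)⁻¹) := by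
      have hsum2 : Summable (fun m => 2 * ((l : ℝ) * v m) ^ 2) := by
        have : (fun m => 2 * ((l : ℝ) * v m) ^ 2)
            = fun m => (2 * (l : ℝ) ^ 2) * v m ^ 2 := by funext m; ring
        rw [this]; exact hvs.mul_left _
      have hreal2 : ∑' m, 2 * ((l : ℝ) * v m) ^ 2 ≤ 2 * ((l : ℝ) ^ 2)⁻¹ := by
        have h2 : ∑' m, 2 * ((l : ℝ) * v m) ^ 2
            = (2 * (l : ℝ) ^ 2) * ∑' m, v m ^ 2 := by
          rw [← tsum_mul_left]
          exact tsum_congr (fun m => by ring)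
        rw [h2]
        calc (2 * (l : ℝ) ^ 2) * ∑' m, v m ^ 2
            ≤ (2 * (l : ℝ) ^ 2) * ((l : ℝ) ^ 4)⁻¹ :=
              mul_le_mul_of_nonneg_left hvsum (by positivity)
          _ = 2 * ((l : ℝ) ^ 2)⁻¹ := by
              field_simp
      calc ∑' m, p m ≤ ∑' m, ENNReal.ofReal (2 * ((l : ℝ) * v m) ^ 2) :=
            ENNReal.tsum_le_tsum (fun m =>
              binom_tail l (v m) (hv0 m) (hv1 m) P (b m) (hb m) (hpmf m) (hw2 m) 2)
        _ = ENNReal.ofReal (∑' m, 2 * ((l : ℝ) * v m) ^ 2) :=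
            (ENNReal.ofReal_tsum_of_nonneg (fun m => by positivity) hsum2).symm
        _ ≤ ENNReal.ofReal (2 * ((l : ℝ) ^ 2)⁻¹) := ENNReal.ofReal_le_ofReal hreal2
    have hquad : P Quad ≤ ENNReal.ofReal (16 * ((l : ℝ) ^ 6)⁻¹) := by
      calc P Quad ≤ ∑' q : ℕ × ℕ × ℕ × ℕ,
            P (⋃ (_ : q.1 ≠ q.2.1 ∧ q.1 ≠ q.2.2.1 ∧ q.1 ≠ q.2.2.2 ∧
              q.2.1 ≠ q.2.2.1 ∧ q.2.1 ≠ q.2.2.2 ∧ q.2.2.1 ≠ q.2.2.2),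
              A q.1 ∩ (A q.2.1 ∩ (A q.2.2.1 ∩ A q.2.2.2))) := measure_iUnion_le _
        _ ≤ ∑' q : ℕ × ℕ × ℕ × ℕ, p q.1 * (p q.2.1 * (p q.2.2.1 * p q.2.2.2)) :=
            ENNReal.tsum_le_tsum hquad_term
        _ = (∑' m, p m) ^ 4 := by
            simp_rw [ENNReal.tsum_prod', ENNReal.tsum_mul_left, ENNReal.tsum_mul_right]
            ring
        _ ≤ (ENNReal.ofReal (2 * ((l : ℝ) ^ 2)⁻¹)) ^ 4 := by gcongr
        _ = ENNReal.ofReal ((2 * ((l : ℝ) ^ 2)⁻¹) ^ 4) :=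
            (ENNReal.ofReal_pow (by positivity) 4).symm
        _ ≤ ENNReal.ofReal (16 * ((l : ℝ) ^ 6)⁻¹) := by
            apply ENNReal.ofReal_le_ofReal
            have h8 : ((2 : ℝ) * ((l : ℝ) ^ 2)⁻¹) ^ 4 = 16 * ((l : ℝ) ^ 8)⁻¹ := by
              rw [mul_pow, ← inv_pow, ← pow_mul]
              norm_num
            rw [h8]
            have h9 : ((l : ℝ) ^ 8)⁻¹ ≤ ((l : ℝ) ^ 6)⁻¹ := by
              apply inv_anti₀ (by positivity)
              exact pow_le_pow_right₀ hl1 (by norm_num)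
            linarith
    -- combine
    calc P {ω | ENNReal.ofReal (ε * l) < ∑' m, ((b m ω - 1 : ℕ) : ENNReal)}
        ≤ P (Big ∪ Quad) := measure_mono hincl
      _ ≤ P Big + P Quad := measure_union_le _ _
      _ ≤ ENNReal.ofReal (2 * ((l : ℝ) ^ 6)⁻¹) + ENNReal.ofReal (16 * ((l : ℝ) ^ 6)⁻¹) :=
          add_le_add hbig hquad
      _ = ENNReal.ofReal (18 * ((l : ℝ) ^ 6)⁻¹) := by
          rw [← ENNReal.ofReal_add (by positivity) (by positivity)]
          ring_nf
      _ ≤ ENNReal.ofReal (max ((L : ℝ) ^ 6) 18 / (l : ℝ) ^ 6) := by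
          apply ENNReal.ofReal_le_ofReal
          rw [div_eq_mul_inv]
          gcongr
          exact le_max_right _ _

end
end

section
/- Let E be a compact metrizable topological space and let M_1(E) be the space of Borel probability measures on E equipped with the topology of weak convergence (so M_1(E) is a compact metrizable space). Then the linear span of the constant function 1 together with all functions of the form μ ↦ ∫_{E^n} f dμ^{⊗n}, where n ∈ ℕ and f : E^n → ℝ is continuous, is dense in the space C(M_1(E)) of continuous real-valued functions on M_1(E) with respect to the supremum norm. -/
open MeasureTheory

noncomputable section

set_option linter.unusedSectionVars false

section Aux

variable (E : Type) [TopologicalSpace E] [CompactSpace E] [TopologicalSpace.MetrizableSpace E]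
    [MeasurableSpace E] [BorelSpace E]

lemma contInt (g : C(E, ℝ)) :
    Continuous fun μ : ProbabilityMeasure E => ∫ x, g x ∂(μ : Measure E) := by
  have := ProbabilityMeasure.continuous_integral_boundedContinuousFunction
    (X := E) (BoundedContinuousFunction.mkOfCompact g)
  simpa using this

lemma sepInt (μ ν : ProbabilityMeasure E)
    (h : ∀ g : C(E, ℝ), ∫ x, g x ∂(μ : Measure E) = ∫ x, g x ∂(ν : Measure E)) : μ = ν := by
  haveI : IsProbabilityMeasure (μ : Measure E) := μ.prop
  haveI : IsProbabilityMeasure (ν : Measure E) := ν.prop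
  haveI : IsProbabilityMeasure μ.val := μ.2
  haveI : IsProbabilityMeasure ν.val := ν.2
  apply Subtype.ext
  apply ext_of_forall_lintegral_eq_of_IsFiniteMeasure
  intro f
  have hg := h ⟨fun x => (f x : ℝ), by continuity⟩
  have h1 := BoundedContinuousFunction.toReal_lintegral_coe_eq_integral f (μ : Measure E)
  have h2 := BoundedContinuousFunction.toReal_lintegral_coe_eq_integral f (ν : Measure E)
  have fin1 := BoundedContinuousFunction.lintegral_lt_top_of_nnreal (μ : Measure E) f
  have fin2 := BoundedContinuousFunction.lintegral_lt_top_of_nnreal (ν : Measure E) f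
  refine (ENNReal.toReal_eq_toReal_iff' fin1.ne fin2.ne).mp ?_
  rw [h1, h2]
  simpa using hg

/-- product of integrals is an integral over the product space -/
lemma prodInt (n : ℕ) (gs : Fin n → C(E, ℝ)) (μ : ProbabilityMeasure E) :
    ∏ i, ∫ x, gs i x ∂(μ : Measure E)
      = ∫ x, (∏ i, gs i (x i)) ∂(Measure.pi fun _ : Fin n => (μ : Measure E)) := by
  haveI : IsProbabilityMeasure (μ : Measure E) := μ.prop
  letI : MeasureSpace E := ⟨(μ : Measure E)⟩
  haveI : SigmaFinite (volume : Measure E) := inferInstance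
  have key := MeasureTheory.integral_fin_nat_prod_eq_prod (E := fun _ : Fin n => E) (μ := fun _ => (volume : Measure E))
    (fun i => fun x => gs i x)
  have hv : (μ : Measure E) = (volume : Measure E) := rfl
  have hvp : (Measure.pi fun _ : Fin n => (μ : Measure E)) = (volume : Measure (Fin n → E)) := by
    rw [MeasureTheory.volume_pi]
    rfl
  rw [hvp, hv]
  exact key.symm


end Aux

/-- for a compact metrizable space `E`, the linear span of the constant
function `1` together with the functions `μ ↦ ∫_{E^n} f dμ^{⊗n}` (`n ∈ ℕ`, `f` continuous)
is dense in `C(M_1(E))`, the continuous functions on the space of Borel probability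
measures on `E` with the topology of weak convergence (which is a compact metrizable space,
so that the canonical topology on `C(M_1(E))` is the topology of uniform convergence, i.e.
that of the supremum norm). -/
theorem polynomials_dense_in_continuous_functions_on_probabilityMeasure
    (E : Type) [TopologicalSpace E] [CompactSpace E] [TopologicalSpace.MetrizableSpace E]
    [MeasurableSpace E] [BorelSpace E] :
    Dense (↑(Submodule.span ℝ
      {G : C(ProbabilityMeasure E, ℝ) |
        (∀ μ : ProbabilityMeasure E, G μ = 1) ∨
        ∃ (n : ℕ) (_ : 0 < n) (f : (Fin n → E) → ℝ) (_ : Continuous f),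
          ∀ μ : ProbabilityMeasure E,
            G μ = ∫ x, f x ∂(Measure.pi fun _ : Fin n => (μ : Measure E))}) :
      Set C(ProbabilityMeasure E, ℝ)) := by
  set POLY : Set C(ProbabilityMeasure E, ℝ) :=
    {G : C(ProbabilityMeasure E, ℝ) |
        (∀ μ : ProbabilityMeasure E, G μ = 1) ∨
        ∃ (n : ℕ) (_ : 0 < n) (f : (Fin n → E) → ℝ) (_ : Continuous f),
          ∀ μ : ProbabilityMeasure E,
            G μ = ∫ x, f x ∂(Measure.pi fun _ : Fin n => (μ : Measure E))} with hPOLY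
  let Φ : C(E, ℝ) → C(ProbabilityMeasure E, ℝ) := fun g =>
    ⟨fun μ => ∫ x, g x ∂(μ : Measure E), contInt E g⟩
  let S₁ : Set C(ProbabilityMeasure E, ℝ) := Set.range Φ
  let A : Subalgebra ℝ C(ProbabilityMeasure E, ℝ) := Algebra.adjoin ℝ S₁
  -- the submonoid of finite products of the Φ g
  let M : Submonoid C(ProbabilityMeasure E, ℝ) :=
    { carrier := {G | ∃ (n : ℕ) (gs : Fin n → C(E, ℝ)), ∀ μ : ProbabilityMeasure E,
        G μ = ∏ i, ∫ x, gs i x ∂(μ : Measure E)}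
      one_mem' := ⟨0, Fin.elim0, fun μ => by simp⟩
      mul_mem' := by
        rintro G₁ G₂ ⟨n, gs, h1⟩ ⟨m, hs, h2⟩
        refine ⟨n + m, Fin.append gs hs, fun μ => ?_⟩
        rw [ContinuousMap.mul_apply, h1, h2, Fin.prod_univ_add]
        simp [Fin.append_left, Fin.append_right] }
  have hMsub : (M : Set C(ProbabilityMeasure E, ℝ)) ⊆ POLY := by
    rintro G ⟨n, gs, hG⟩
    rcases Nat.eq_zero_or_pos n with hn | hn
    · subst hn
      left
      intro μ
      simpa using hG μ
    · right
      refine ⟨n, hn, fun x => ∏ i, gs i (x i),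
        continuous_finset_prod _ fun i _ => (gs i).continuous.comp (continuous_apply i),
        fun μ => ?_⟩
      rw [hG μ, prodInt]
  have hsub : (A : Set C(ProbabilityMeasure E, ℝ)) ⊆ ↑(Submodule.span ℝ POLY) := by
    intro q hq
    have h1 : q ∈ Submodule.span ℝ (Submonoid.closure S₁ : Set C(ProbabilityMeasure E, ℝ)) := by
      have := Algebra.adjoin_eq_span (R := ℝ) (s := S₁)
      rw [← this]
      exact hq
    refine Submodule.span_mono ?_ h1
    refine subset_trans ?_ hMsub
    refine Submonoid.closure_le.mpr ?_
    rintro G ⟨g, rfl⟩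
    exact ⟨1, fun _ => g, fun μ => by simp [Φ]⟩
  -- density via Stone-Weierstrass on compact subsets
  intro F
  have hb := (Metric.uniformity_basis_dist (α := ℝ)).compactConvergenceUniformity
    (α := ProbabilityMeasure E)
  rw [mem_closure_iff_nhds_basis (nhds_basis_uniformity' hb)]
  rintro ⟨K, ε⟩ ⟨hK, hε⟩
  by_cases hne : K.Nonempty
  · haveI : CompactSpace ↥K := isCompact_iff_compactSpace.mp hK
    haveI : Nonempty ↥K := hne.to_subtype
    let ρ : C(ProbabilityMeasure E, ℝ) →ₐ[ℝ] C(↥K, ℝ) :=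
      ContinuousMap.compRightAlgHom ℝ ℝ ⟨Subtype.val, continuous_subtype_val⟩
    let B := A.map ρ
    have hsep : B.SeparatesPoints := by
      intro x y hxy
      have hxy' : (x : ProbabilityMeasure E) ≠ (y : ProbabilityMeasure E) :=
        fun h => hxy (Subtype.ext h)
      have hex : ∃ g : C(E, ℝ),
          ∫ z, g z ∂((x : ProbabilityMeasure E) : Measure E)
            ≠ ∫ z, g z ∂((y : ProbabilityMeasure E) : Measure E) := by
        by_contra hc
        push_neg at hc
        exact hxy' (sepInt E _ _ hc)
      obtain ⟨g, hg⟩ := hex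
      have hmem : ρ (Φ g) ∈ B := ⟨Φ g, Algebra.subset_adjoin ⟨g, rfl⟩, rfl⟩
      exact ⟨⇑(ρ (Φ g)), ⟨ρ (Φ g), hmem, rfl⟩, hg⟩
    have htop := ContinuousMap.subalgebra_topologicalClosure_eq_top_of_separatesPoints B hsep
    have hFcl : ρ F ∈ closure (B : Set C(↥K, ℝ)) := by
      have h1 : ρ F ∈ B.topologicalClosure := by rw [htop]; trivial
      exact h1
    rw [Metric.mem_closure_iff] at hFcl
    obtain ⟨p, hpB, hdist⟩ := hFcl ε hε
    obtain ⟨q, hqA, rfl⟩ := hpB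
    refine ⟨q, hsub hqA, fun μ hμ => ?_⟩
    have hle : dist (F μ) (q μ) ≤ dist (ρ F) (ρ q) := by
      have h0 : dist (F μ) (q μ) = dist ((ρ F) (⟨μ, hμ⟩ : ↥K)) ((ρ q) (⟨μ, hμ⟩ : ↥K)) := rfl
      rw [h0]
      exact ContinuousMap.dist_apply_le_dist (⟨μ, hμ⟩ : ↥K)
    calc dist (F μ) (q μ) ≤ dist (ρ F) (ρ q) := hle
      _ < ε := hdist
  · exact ⟨0, Submodule.zero_mem _, fun x hx => absurd ⟨x, hx⟩ hne⟩

end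
end
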